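/- Let A be a skew PBW extension of R with generators x_1,…,x_n. For each 1 ≤ i ≤ n, there exists an injective ring endomorphism σ_i : R → R and a σ_i-derivation δ_i : R → R such that x_i r = σ_i(r) x_i + δ_i(r) for all r ∈ R. -/

import Mathlib

private lemma list_prod_ofFn_single {M : Type*} [Monoid M] :
    ∀ (n : ℕ) (g : Fin n → M) (i : Fin n), (∀ j, j ≠ i → g j = 1) →
      (List.ofFn g).prod = g i := by
  intro n
  induction n with
  | zero => exact fun g i _ => i.elim0
  | succ n ih =>
    intro g i h
    rw [List.ofFn_succ, List.prod_cons]
    cases i using Fin.cases with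
    | zero =>
      have h1 : ∀ j : Fin n, g j.succ = 1 := fun j => h _ (Fin.succ_ne_zero j)
      simp [h1]
    | succ i =>
      rw [h 0 (Ne.symm (Fin.succ_ne_zero i)), one_mul,
        ih (fun j => g j.succ) i (fun j hj => h j.succ (by simpa using hj))]

/-- A skew PBW extension `A = σ(R)⟨x_1,…,x_n⟩` of a ring `R`:  `R` embeds in
`A` via `f`, `A` is a free left `R`-module with basis the standard monomials
`x^α = x_1^{α_1}⋯x_n^{α_n}`, for each `i` and nonzero `r ∈ R` there is a
nonzero `c_{i,r}` with `x_i r − c_{i,r} x_i ∈ R`, and for each `i, j` there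
is a nonzero `c_{i,j}` with `x_j x_i − c_{i,j} x_i x_j ∈ R + Rx_1 + ⋯ + Rx_n`. -/
structure SkewPBWExt (R A : Type*) [Ring R] [Ring A] (n : ℕ) where
  f : R →+* A
  hf : Function.Injective f
  x : Fin n → A
  basis : @Module.Basis (Fin n → ℕ) R A _ _ (Module.compHom A f)
  hbasis : ∀ α : Fin n → ℕ, basis α = (List.ofFn fun i => x i ^ α i).prod
  c : Fin n → R → R
  hc : ∀ i r, r ≠ 0 → c i r ≠ 0 ∧ ∃ r0 : R, x i * f r - f (c i r) * x i = f r0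
  cc : Fin n → Fin n → R
  hcc0 : ∀ i j, cc i j ≠ 0
  hcc : ∀ i j, ∃ (r0 : R) (s : Fin n → R),
    x j * x i - f (cc i j) * (x i * x j) = f r0 + ∑ k, f (s k) * x k


/-- sigma-delta -/
theorem skewPBW_sigma_delta_exists (R A : Type*) [Ring R] [Ring A] (n : ℕ)
    (E : SkewPBWExt R A n) (i : Fin n) :
    ∃ (σ : R →+* R) (δ : R → R),
      Function.Injective σ ∧
      (∀ a b : R, δ (a + b) = δ a + δ b) ∧
      (∀ a b : R, δ (a * b) = σ a * δ b + δ a * b) ∧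
      ∀ r : R, E.x i * E.f r = E.f (σ r) * E.x i + E.f (δ r) := by
  letI : Module R A := Module.compHom A E.f
  set f := E.f with hfdef
  set X := E.x i with hXdef
  -- the basis vector at the multi-index `Pi.single i 1` is `x i`
  have hμ : E.basis (Pi.single i 1) = X := by
    rw [E.hbasis]
    rw [list_prod_ofFn_single n _ i (fun j hj => by
      rw [Pi.single_eq_of_ne hj, pow_zero])]
    rw [Pi.single_eq_same, pow_one]
  have h0 : E.basis 0 = 1 := by
    rw [E.hbasis]; simp
  have hμne : (Pi.single i 1 : Fin n → ℕ) ≠ 0 := by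
    intro h
    have := congrFun h i
    simp at this
  have hsmul : ∀ (r : R) (a : A), r • a = f r * a := fun r a => rfl
  -- uniqueness of coefficients
  have key : ∀ a b a' b' : R, f a * X + f b = f a' * X + f b' → a = a' ∧ b = b' := by
    intro a b a' b' h
    have h' : a • E.basis (Pi.single i 1) + b • E.basis 0
        = a' • E.basis (Pi.single i 1) + b' • E.basis 0 := by
      rw [hμ, h0, hsmul, hsmul, hsmul, hsmul, mul_one, mul_one, h]
    have hrep := congrArg E.basis.repr h'
    simp only [map_add, map_smul, Module.Basis.repr_self] at hrep
    constructor
    · have := congrFun (congrArg DFunLike.coe hrep) (Pi.single i 1)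
      simpa [Finsupp.single_apply, hμne, Ne.symm hμne] using this
    · have := congrFun (congrArg DFunLike.coe hrep) 0
      simpa [Finsupp.single_apply, hμne, Ne.symm hμne] using this
  -- existence of coefficients
  have P : ∀ r : R, ∃ a b : R, X * f r = f a * X + f b := by
    intro r
    by_cases hr : r = 0
    · exact ⟨0, 0, by simp [hr]⟩
    · obtain ⟨_, r0, hr0⟩ := E.hc i r hr
      refine ⟨E.c i r, r0, ?_⟩
      rw [← hr0, hXdef, hfdef]
      abel
  let σ0 : R → R := fun r => (P r).choose
  let δ0 : R → R := fun r => (P r).choose_spec.choose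
  have spec : ∀ r : R, X * f r = f (σ0 r) * X + f (δ0 r) :=
    fun r => (P r).choose_spec.choose_spec
  have uniq : ∀ r a b : R, X * f r = f a * X + f b → σ0 r = a ∧ δ0 r = b := by
    intro r a b h
    exact key _ _ _ _ ((spec r).symm.trans h)
  have hone : σ0 1 = 1 ∧ δ0 1 = 0 := uniq 1 1 0 (by simp)
  have hzero : σ0 0 = 0 ∧ δ0 0 = 0 := uniq 0 0 0 (by simp)
  have hadd : ∀ a b : R, σ0 (a + b) = σ0 a + σ0 b ∧ δ0 (a + b) = δ0 a + δ0 b := by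
    intro a b
    refine uniq _ _ _ ?_
    rw [map_add, mul_add, spec a, spec b, map_add, map_add]
    noncomm_ring
  have hmul : ∀ a b : R, σ0 (a * b) = σ0 a * σ0 b ∧ δ0 (a * b) = σ0 a * δ0 b + δ0 a * b := by
    intro a b
    refine uniq _ _ _ ?_
    rw [map_mul, ← mul_assoc, spec a, add_mul, mul_assoc, spec b]
    simp only [map_add, map_mul]
    noncomm_ring
  have hne : ∀ r : R, r ≠ 0 → σ0 r ≠ 0 := by
    intro r hr
    obtain ⟨hc0, r0, hr0⟩ := E.hc i r hr
    have := (uniq r (E.c i r) r0 (by rw [← hr0, hXdef, hfdef]; abel)).1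
    rw [this]; exact hc0
  refine ⟨⟨⟨⟨σ0, hone.1⟩, fun a b => (hmul a b).1⟩, hzero.1, fun a b => (hadd a b).1⟩,
    δ0, ?_, fun a b => (hadd a b).2, fun a b => (hmul a b).2, spec⟩
  intro a b h
  by_contra hab
  have hsub : σ0 (a - b) = σ0 a - σ0 b := by
    have := (hadd (a - b) b).1
    rw [sub_add_cancel] at this
    rw [this]; abel
  exact hne (a - b) (sub_ne_zero.mpr hab) (by
    simpa [hsub] using sub_eq_zero.mpr (h : σ0 a = σ0 b))
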